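/- Distributed gradient descent is equivalent to joint gradient descent on a factored controller: if each agent i updates its own parameters w_i by the stochastic gradient Δw_i^j = α γ^t r(t) Σ_{τ≤t} ∂/∂w_i^j log Pr(a_i(τ) | h_i^{τ-1}, μ_i) computed from its local history, then, given the same sampled joint history and same initial parameters, the resulting parameter updates coincide exactly with those of centralized stochastic gradient descent on V using the joint log-likelihood Σ_{τ≤t} ∂/∂w log Pr(a⃗(τ) | h^{τ-1}, μ⃗). -/

import Mathlib

open scoped BigOperators

/-- Distributed gradient descent is equivalent to joint gradient descent on a
factored controller.  Here `P i τ w` denotes the probability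
`Pr(a_i(τ) | h_i^{τ-1}, μ_i)` of agent `i`'s action at step `τ` of the sampled
joint history, viewed as a function of agent `k`'s parameter `w = w_k^j`
(all other parameters being fixed); factors of agents `i ≠ k` do not depend on
this parameter.  Then the centralized update
`α γ^t r(t) Σ_{τ≤t} ∂/∂w log Pr(a⃗(τ) | h^{τ-1}, μ⃗)`, using the joint action
probability `Pr(a⃗(τ) | h^{τ-1}, μ⃗) = ∏ i Pr(a_i(τ) | h_i^{τ-1}, μ_i)`,
coincides exactly with agent `k`'s local update
`α γ^t r(t) Σ_{τ≤t} ∂/∂w log Pr(a_k(τ) | h_k^{τ-1}, μ_k)`. -/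
theorem distributed_gradient_descent_eq_joint_gradient_descent
    {m : ℕ} (P : Fin m → ℕ → ℝ → ℝ) (k : Fin m) (w₀ : ℝ)
    (α γ : ℝ) (t : ℕ) (r : ℝ)
    (hpos : ∀ i τ w, 0 < P i τ w)
    (hdiff : ∀ i τ, Differentiable ℝ (P i τ))
    (hconst : ∀ i, i ≠ k → ∀ τ w, P i τ w = P i τ w₀) :
    α * γ ^ t * r *
        ∑ τ ∈ Finset.range t, deriv (fun w => Real.log (∏ i, P i τ w)) w₀ =
      α * γ ^ t * r *
        ∑ τ ∈ Finset.range t, deriv (fun w => Real.log (P k τ w)) w₀ := by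
  congr 1
  apply Finset.sum_congr rfl
  intro τ _
  have hfun : (fun w => Real.log (∏ i, P i τ w)) =
      fun w => ∑ i, Real.log (P i τ w) := by
    funext w
    exact Real.log_prod (fun i _ => (hpos i τ w).ne')
  rw [hfun]
  have hdlog : ∀ i, Differentiable ℝ (fun w => Real.log (P i τ w)) := by
    intro i
    exact fun w => ((hdiff i τ w).log (hpos i τ w).ne')
  rw [deriv_fun_sum (fun i _ => (hdlog i).differentiableAt)]
  rw [Finset.sum_eq_single k]
  · intro i _ hik
    have : (fun w => Real.log (P i τ w)) = fun _ => Real.log (P i τ w₀) := by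
      funext w; rw [hconst i hik τ w]
    rw [this, deriv_const]
  · intro h; exact absurd (Finset.mem_univ k) h
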